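/- arXiv:0803.2686 — 4 statements merged into one kernel-verified Lean document; each statement's English description precedes it below -/
import Mathlib

section
/- Let S be an anti-Hermitian operator and H any bounded operator on a finite-dimensional Hilbert space. Define the superoperator L(X) = [S, X] = SX - XS. Then for every k ≥ 0, the norm of the remainder of the Taylor expansion of e^S H e^{-S} satisfies ‖ e^S H e^{-S} - Σ_{p=0}^{k-1} (1/p!) L^p(H) ‖ ≤ (1/k!) ‖ L^k(H) ‖, where ‖·‖ is the operator norm. -/
open scoped Matrix.Norms.L2Operator
open Matrix

namespace TaylorRemainderAux

variable {n : ℕ}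

noncomputable def g (S A : Matrix (Fin n) (Fin n) ℂ) (t : ℝ) : Matrix (Fin n) (Fin n) ℂ :=
  NormedSpace.exp (t • S) * A * NormedSpace.exp (t • (-S))

lemma g_zero (S A : Matrix (Fin n) (Fin n) ℂ) : g S A 0 = A := by
  simp [g, NormedSpace.exp_zero]

lemma hasDerivAt_g (S A : Matrix (Fin n) (Fin n) ℂ) (t : ℝ) :
    HasDerivAt (g S A) (g S ⁅S, A⁆ t) t := by
  have hE := hasDerivAt_exp_smul_const (𝕂 := ℝ) S t
  have hF := hasDerivAt_exp_smul_const' (𝕂 := ℝ) (-S) t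
  have h := (hE.mul_const A).mul hF
  refine h.congr_deriv (Eq.symm ?_)
  simp only [g, Ring.lie_def]
  noncomm_ring

lemma star_exp_smul (S : Matrix (Fin n) (Fin n) ℂ) (hS : Sᴴ = -S) (t : ℝ) :
    star (NormedSpace.exp (t • S)) = NormedSpace.exp (t • (-S)) := by
  rw [star_eq_conjTranspose, ← Matrix.exp_conjTranspose, conjTranspose_smul, hS]
  simp [smul_neg]

lemma mem_unitary (S : Matrix (Fin n) (Fin n) ℂ) (hS : Sᴴ = -S) (t : ℝ) :
    NormedSpace.exp (t • S) ∈ unitary (Matrix (Fin n) (Fin n) ℂ) := by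
  have hst := star_exp_smul S hS t
  have hc : Commute (t • S) (t • (-S)) := by
    have : t • (-S) = -(t • S) := by rw [smul_neg]
    rw [this]; exact (Commute.refl _).neg_right
  rw [Unitary.mem_iff, hst]
  constructor
  · rw [← Matrix.exp_add_of_commute _ _ hc.symm]
    simp [smul_neg, NormedSpace.exp_zero]
  · rw [← Matrix.exp_add_of_commute _ _ hc]
    simp [smul_neg, NormedSpace.exp_zero]

lemma norm_g (S : Matrix (Fin n) (Fin n) ℂ) (hS : Sᴴ = -S) (A : Matrix (Fin n) (Fin n) ℂ)
    (t : ℝ) : ‖g S A t‖ = ‖A‖ := by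
  have hu := mem_unitary S hS t
  rw [g, ← star_exp_smul S hS t,
    CStarRing.norm_mul_mem_unitary _ (Unitary.star_mem hu),
    CStarRing.norm_mem_unitary_mul _ hu]

end TaylorRemainderAux

namespace TaylorRemainderAux

lemma hasDerivAt_phi (S H : Matrix (Fin n) (Fin n) ℂ) (m : ℕ) (t : ℝ) :
    HasDerivAt (fun t : ℝ => ∑ p ∈ Finset.range (m + 1),
        (((p.factorial : ℝ))⁻¹ * (1 - t) ^ p) • g S ((fun X => ⁅S, X⁆)^[p] H) t)
      ((((m.factorial : ℝ))⁻¹ * (1 - t) ^ m) • g S ((fun X => ⁅S, X⁆)^[m + 1] H) t) t := by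
  induction m with
  | zero =>
    simp only [Finset.range_one, Finset.sum_singleton, pow_zero, Nat.factorial_zero,
      Nat.cast_one, inv_one, mul_one, one_smul, Function.iterate_zero, Function.iterate_one, id]
    simpa using hasDerivAt_g S H t
  | succ m ih =>
    have hsplit : (fun t : ℝ => ∑ p ∈ Finset.range (m + 1 + 1),
        (((p.factorial : ℝ))⁻¹ * (1 - t) ^ p) • g S ((fun X => ⁅S, X⁆)^[p] H) t) =
        fun t : ℝ => (∑ p ∈ Finset.range (m + 1),
          (((p.factorial : ℝ))⁻¹ * (1 - t) ^ p) • g S ((fun X => ⁅S, X⁆)^[p] H) t) +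
          ((((m + 1).factorial : ℝ))⁻¹ * (1 - t) ^ (m + 1)) •
            g S ((fun X => ⁅S, X⁆)^[m + 1] H) t := by
      funext t; exact Finset.sum_range_succ _ _
    rw [hsplit]
    have hscal : HasDerivAt (fun t : ℝ => (((m + 1).factorial : ℝ))⁻¹ * (1 - t) ^ (m + 1))
        ((((m + 1).factorial : ℝ))⁻¹ * (((m : ℝ) + 1) * (1 - t) ^ m * (-1))) t := by
      have h1 : HasDerivAt (fun t : ℝ => (1 - t)) (-1) t := (hasDerivAt_id t).const_sub 1
      have h2 := h1.pow (m + 1)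
      have h3 := h2.const_mul (((m + 1).factorial : ℝ))⁻¹
      refine h3.congr_deriv (Eq.symm ?_)
      push_cast
      ring
    have hlast := hscal.smul (hasDerivAt_g S ((fun X => ⁅S, X⁆)^[m + 1] H) t)
    have htot := ih.add hlast
    refine htot.congr_deriv (Eq.symm ?_)
    rw [← Function.iterate_succ_apply' (fun X => ⁅S, X⁆) (m + 1)]
    have hfac : (((m + 1).factorial : ℝ)) = ((m : ℝ) + 1) * (m.factorial : ℝ) := by
      rw [Nat.factorial_succ]; push_cast; ring
    have hcancel : (((m.factorial : ℝ))⁻¹ * (1 - t) ^ m) •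
          g S ((fun X => ⁅S, X⁆)^[m + 1] H) t +
        ((((m + 1).factorial : ℝ))⁻¹ * (((m : ℝ) + 1) * (1 - t) ^ m * (-1))) •
          g S ((fun X => ⁅S, X⁆)^[m + 1] H) t = 0 := by
      rw [← add_smul]
      have : (((m.factorial : ℝ))⁻¹ * (1 - t) ^ m) +
          (((m + 1).factorial : ℝ))⁻¹ * (((m : ℝ) + 1) * (1 - t) ^ m * (-1)) = 0 := by
        rw [hfac]
        have hm : (m.factorial : ℝ) ≠ 0 := Nat.cast_ne_zero.mpr m.factorial_ne_zero
        have hm1 : ((m : ℝ) + 1) ≠ 0 := by positivity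
        field_simp
        ring
      rw [this, zero_smul]
    calc ((((m + 1).factorial : ℝ))⁻¹ * (1 - t) ^ (m + 1)) •
          g S ((fun X => ⁅S, X⁆)^[m + 1 + 1] H) t
        = 0 + ((((m + 1).factorial : ℝ))⁻¹ * (1 - t) ^ (m + 1)) •
          g S ((fun X => ⁅S, X⁆)^[m + 1 + 1] H) t := by rw [zero_add]
      _ = _ := by rw [← hcancel]; abel

end TaylorRemainderAux

open TaylorRemainderAux

/-- **Taylor remainder bound for unitary conjugation.**
If `S` is anti-Hermitian and `H` any operator on a finite-dimensional Hilbert space,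
and `L(X) = [S,X]` denotes the commutator superoperator, then for every `k ≥ 1`,
the remainder of the Taylor expansion of the conjugation satisfies
`‖exp(S) H exp(-S) - ∑_{p<k} (1/p!) L^p(H)‖ ≤ (1/k!) ‖L^k(H)‖`
in the operator (spectral) norm. -/
theorem taylor_remainder_bound {n : ℕ} (S H : Matrix (Fin n) (Fin n) ℂ)
    (hS : Sᴴ = -S) (k : ℕ) (hk : 1 ≤ k) :
    ‖NormedSpace.exp S * H * NormedSpace.exp (-S) -
        ∑ p ∈ Finset.range k, ((p.factorial : ℂ))⁻¹ • (fun X => ⁅S, X⁆)^[p] H‖ ≤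
      ((k.factorial : ℝ))⁻¹ * ‖(fun X => ⁅S, X⁆)^[k] H‖ := by
  obtain ⟨m, rfl⟩ : ∃ m, k = m + 1 := ⟨k - 1, (Nat.succ_pred_eq_of_pos hk).symm⟩
  set L : Matrix (Fin n) (Fin n) ℂ → Matrix (Fin n) (Fin n) ℂ := fun X => ⁅S, X⁆ with hL
  set φ : ℝ → Matrix (Fin n) (Fin n) ℂ := fun t => ∑ p ∈ Finset.range (m + 1),
    (((p.factorial : ℝ))⁻¹ * (1 - t) ^ p) • g S (L^[p] H) t with hφ
  set C : ℝ := ‖L^[m + 1] H‖ with hC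
  have hCnn : 0 ≤ C := norm_nonneg _
  have hderiv : ∀ t : ℝ, HasDerivAt (fun t => φ t - φ 0)
      ((((m.factorial : ℝ))⁻¹ * (1 - t) ^ m) • g S (L^[m + 1] H) t) t := by
    intro t
    exact (hasDerivAt_phi S H m t).sub_const (φ 0)
  -- the boundary function
  set B : ℝ → ℝ := fun t => C * (1 - (1 - t) ^ (m + 1)) / ((m + 1).factorial : ℝ) with hB
  set B' : ℝ → ℝ := fun t => C * (((m : ℝ) + 1) * (1 - t) ^ m) / ((m + 1).factorial : ℝ)
    with hB'
  have hBderiv : ∀ t : ℝ, HasDerivAt B (B' t) t := by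
    intro t
    have h1 : HasDerivAt (fun t : ℝ => (1 - t)) (-1) t := (hasDerivAt_id t).const_sub 1
    have h2 := ((h1.pow (m + 1)).const_sub 1).const_mul C
    have h3 := h2.div_const ((m + 1).factorial : ℝ)
    refine h3.congr_deriv (Eq.symm ?_)
    simp only [hB']
    push_cast
    ring
  have hbound : ∀ t ∈ Set.Ico (0 : ℝ) 1,
      ‖(((m.factorial : ℝ))⁻¹ * (1 - t) ^ m) • g S (L^[m + 1] H) t‖ ≤ B' t := by
    intro t ht
    have ht1 : (0 : ℝ) ≤ 1 - t := by linarith [ht.2.le]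
    rw [norm_smul, norm_g S hS, Real.norm_eq_abs, abs_mul, abs_inv, Nat.abs_cast, abs_pow,
      abs_of_nonneg ht1]
    apply le_of_eq
    have hm : (m.factorial : ℝ) ≠ 0 := Nat.cast_ne_zero.mpr m.factorial_ne_zero
    have hfac : (((m + 1).factorial : ℝ)) = ((m : ℝ) + 1) * (m.factorial : ℝ) := by
      rw [Nat.factorial_succ]; push_cast; ring
    have hm1 : ((m : ℝ) + 1) ≠ 0 := by positivity
    simp only [hB', hC, hfac]
    field_simp
  have hcont : ContinuousOn (fun t => φ t - φ 0) (Set.Icc (0 : ℝ) 1) :=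
    (fun t _ => ((hderiv t).differentiableAt.continuousAt.continuousWithinAt))
  have key := image_norm_le_of_norm_deriv_right_le_deriv_boundary hcont
    (fun t ht => (hderiv t).hasDerivWithinAt) (by simp [hB]) hBderiv hbound
    (Set.right_mem_Icc.mpr zero_le_one)
  -- identify φ 1 and φ 0
  have hφ1 : φ 1 = NormedSpace.exp S * H * NormedSpace.exp (-S) := by
    simp only [hφ]
    rw [Finset.sum_eq_single 0]
    · simp only [Function.iterate_zero, id, pow_zero, Nat.factorial_zero, Nat.cast_one,
        inv_one, mul_one, one_smul, g, one_smul]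
    · intro p _ hp
      have : (1 : ℝ) - 1 = 0 := by ring
      rw [this, zero_pow hp]
      simp
    · intro h; exact absurd (Finset.mem_range.mpr (Nat.succ_pos m)) h
  have hφ0 : φ 0 = ∑ p ∈ Finset.range (m + 1), ((p.factorial : ℂ))⁻¹ • L^[p] H := by
    simp only [hφ]
    refine Finset.sum_congr rfl fun p _ => ?_
    rw [g_zero]
    simp only [sub_zero, one_pow, mul_one]
    have h1 : ((p.factorial : ℂ))⁻¹ = algebraMap ℝ ℂ (((p.factorial : ℝ))⁻¹) := by
      rw [map_inv₀, map_natCast]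
    rw [h1, algebraMap_smul]
  have hB1 : B 1 = ((m + 1).factorial : ℝ)⁻¹ * C := by
    simp only [hB]
    rw [show (1 : ℝ) - 1 = 0 by ring, zero_pow (Nat.succ_ne_zero m)]
    ring
  calc ‖NormedSpace.exp S * H * NormedSpace.exp (-S) -
        ∑ p ∈ Finset.range (m + 1), ((p.factorial : ℂ))⁻¹ • L^[p] H‖
      = ‖φ 1 - φ 0‖ := by rw [hφ1, hφ0]
    _ ≤ B 1 := key
    _ = ((m + 1).factorial : ℝ)⁻¹ * C := hB1
end

section
/- Let S be anti-Hermitian and H bounded. Then ‖ e^S H e^{-S} - H - [S,H] ‖ ≤ (1/2) ‖ [S,[S,H]] ‖. -/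
open scoped Matrix.Norms.L2Operator
open Matrix

namespace ConjRemainderAux

open NormedSpace Set

variable {n : ℕ}

lemma norm_one_le : ‖(1 : Matrix (Fin n) (Fin n) ℂ)‖ ≤ 1 := by
  rw [Matrix.cstar_norm_def, _root_.map_one]
  exact ContinuousLinearMap.norm_id_le

lemma norm_unitary_le {U : Matrix (Fin n) (Fin n) ℂ} (h : Uᴴ * U = 1) : ‖U‖ ≤ 1 := by
  have h2 : ‖U‖ * ‖U‖ ≤ 1 := by
    rw [← Matrix.l2_opNorm_conjTranspose_mul_self, h]; exact norm_one_le
  nlinarith [norm_nonneg U]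

lemma exp_skew_unitary {S : Matrix (Fin n) (Fin n) ℂ} (hS : Sᴴ = -S) (t : ℝ) :
    (exp (t • S))ᴴ * exp (t • S) = 1 := by
  have h1 : (t • S)ᴴ = -(t • S) := by
    rw [Matrix.conjTranspose_smul, hS, star_trivial, smul_neg]
  have key : exp (-(t • S)) * exp (t • S) = 1 := by
    have h3 := (Matrix.exp_add_of_commute (-(t • S)) (t • S)
      ((Commute.refl (t • S)).neg_left)).symm
    rw [neg_add_cancel, exp_zero] at h3
    exact h3
  have hstar : (exp (t • S))ᴴ = exp (-(t • S)) := by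
    rw [← h1]; exact (Matrix.exp_conjTranspose (t • S)).symm
  rw [hstar]; exact key

lemma norm_conj_le {S : Matrix (Fin n) (Fin n) ℂ} (hS : Sᴴ = -S) (t : ℝ)
    (X : Matrix (Fin n) (Fin n) ℂ) :
    ‖exp (t • S) * X * exp (t • (-S))‖ ≤ ‖X‖ := by
  have hS' : (-S)ᴴ = -(-S) := by rw [Matrix.conjTranspose_neg, hS, neg_neg]
  have h1 : ‖exp (t • S)‖ ≤ 1 := norm_unitary_le (exp_skew_unitary hS t)
  have h2 : ‖exp (t • (-S))‖ ≤ 1 := norm_unitary_le (exp_skew_unitary hS' t)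
  calc ‖exp (t • S) * X * exp (t • (-S))‖
      ≤ ‖exp (t • S) * X‖ * ‖exp (t • (-S))‖ := Matrix.l2_opNorm_mul _ _
    _ ≤ ‖exp (t • S)‖ * ‖X‖ * ‖exp (t • (-S))‖ := by
        have := Matrix.l2_opNorm_mul (exp (t • S)) X
        have h3 : (0:ℝ) ≤ ‖exp (t • (-S))‖ := norm_nonneg _
        nlinarith
    _ ≤ ‖X‖ := by nlinarith [norm_nonneg X, norm_nonneg (exp (t • S) * X),
        Matrix.l2_opNorm_mul (exp (t • S)) X]

lemma hasDerivAt_conj (S X : Matrix (Fin n) (Fin n) ℂ) (t : ℝ) :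
    HasDerivAt (fun u : ℝ => exp (u • S) * X * exp (u • (-S)))
      (exp (t • S) * ⁅S, X⁆ * exp (t • (-S))) t := by
  have h1 : HasDerivAt (fun u : ℝ => exp (u • S)) (S * exp (t • S)) t :=
    hasDerivAt_exp_smul_const' S t
  have h2 : HasDerivAt (fun u : ℝ => exp (u • (-S))) (exp (t • (-S)) * (-S)) t :=
    hasDerivAt_exp_smul_const (-S) t
  have key := (h1.mul_const X).mul h2
  refine key.congr_deriv ?_
  have c1 : S * exp (t • S) = exp (t • S) * S :=
    (((Commute.refl S).smul_right t).exp_right)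
  have c2 : S * exp (t • (-S)) = exp (t • (-S)) * S :=
    (((Commute.refl S).neg_right.smul_right t).exp_right)
  rw [Ring.lie_def]
  rw [c1]
  rw [mul_neg, mul_sub, sub_mul, mul_neg]
  rw [show exp (t • S) * X * (exp (t • (-S)) * S)
      = exp (t • S) * X * (S * exp (t • (-S))) by rw [c2]]
  noncomm_ring

end ConjRemainderAux

/-- If `S` is anti-Hermitian and `H` any operator on a finite-dimensional Hilbert space,
then `‖exp(S) H exp(-S) - H - [S,H]‖ ≤ (1/2) ‖[S,[S,H]]‖` in the operator norm
(the `k = 2` case of the Taylor remainder bound for unitary conjugation). -/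
theorem conj_second_order_remainder {n : ℕ} (S H : Matrix (Fin n) (Fin n) ℂ)
    (hS : Sᴴ = -S) :
    ‖NormedSpace.exp S * H * NormedSpace.exp (-S) - H - ⁅S, H⁆‖ ≤
      (1 / 2 : ℝ) * ‖⁅S, ⁅S, H⁆⁆‖ := by
  open NormedSpace Set ConjRemainderAux in
  set C := ‖⁅S, ⁅S, H⁆⁆‖ with hC
  have hC0 : 0 ≤ C := norm_nonneg _
  set f : ℝ → Matrix (Fin n) (Fin n) ℂ :=
    fun t => exp (t • S) * H * exp (t • (-S)) with hf
  set g : ℝ → Matrix (Fin n) (Fin n) ℂ :=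
    fun t => exp (t • S) * ⁅S, H⁆ * exp (t • (-S)) with hg
  -- g bound via mean value on [0,1]
  have hgderiv : ∀ x ∈ Icc (0:ℝ) 1,
      HasDerivWithinAt g (exp (x • S) * ⁅S, ⁅S, H⁆⁆ * exp (x • (-S))) (Icc 0 1) x :=
    fun x _ => (hasDerivAt_conj S ⁅S, H⁆ x).hasDerivWithinAt
  have key1 : ∀ x ∈ Icc (0:ℝ) 1, ‖g x - g 0‖ ≤ C * (x - 0) :=
    norm_image_sub_le_of_norm_deriv_le_segment' hgderiv
      (fun x _ => norm_conj_le hS x _)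
  -- φ = f - f 0 - t • g 0
  set φ : ℝ → Matrix (Fin n) (Fin n) ℂ := fun t => f t - f 0 - t • g 0 with hφ
  have hφderiv : ∀ x : ℝ, HasDerivAt φ (g x - g 0) x := by
    intro x
    have h1 : HasDerivAt f (g x) x := hasDerivAt_conj S H x
    have h2 : HasDerivAt (fun t : ℝ => t • g 0) ((1:ℝ) • g 0) x :=
      (hasDerivAt_id x).smul_const (g 0)
    exact ((h1.sub_const (f 0)).sub h2).congr_deriv (by rw [one_smul])
  have hB : ∀ x : ℝ, HasDerivAt (fun x : ℝ => C / 2 * x ^ 2) (C * x) x := by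
    intro x
    have := (hasDerivAt_pow 2 x).const_mul (C / 2)
    refine this.congr_deriv ?_
    ring
  have key2 : ‖φ 1‖ ≤ C / 2 * (1:ℝ) ^ 2 := by
    have := image_norm_le_of_norm_deriv_right_le_deriv_boundary
      (f := φ) (f' := fun x => g x - g 0) (a := 0) (b := 1)
      (fun x _ => (hφderiv x).continuousAt.continuousWithinAt)
      (fun x _ => (hφderiv x).hasDerivWithinAt)
      (by simp [hφ]) hB
      (fun x hx => by simpa using key1 x (Ico_subset_Icc_self hx))
    exact this (right_mem_Icc.2 zero_le_one)
  have hφ1 : φ 1 = exp S * H * exp (-S) - H - ⁅S, H⁆ := by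
    have e1 : (exp : Matrix (Fin n) (Fin n) ℂ → _) = exp := rfl
    simp only [hφ, hf, hg, one_smul, zero_smul, exp_zero, one_mul, mul_one, e1]
  rw [hφ1] at key2
  calc ‖exp S * H * exp (-S) - H - ⁅S, H⁆‖ ≤ C / 2 * 1 ^ 2 := key2
    _ = 1 / 2 * C := by ring
end

section
/- Ground-state energy of the subdivision gadget: in the subdivision-gadget setting with 0 < J and Δ = J ε^{-2} for some 0 < ε ≤ 1, the smallest eigenvalue of H = Δ|1⟩⟨1|⊗I + √(ΔJ/2) X⊗(-A+B) + (J/2)I⊗(A²+B²) differs from the smallest eigenvalue of J·(A⊗B) by at most C·εJ for an absolute constant C. -/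
open scoped Matrix.Norms.L2Operator Kronecker
open Matrix

noncomputable section

/-- Projector `|1⟩⟨1|` on the mediator qubit. -/
def P1 : Matrix (Fin 2) (Fin 2) ℂ := !![0, 0; 0, 1]

/-- Pauli `X` on the mediator qubit. -/
def pX : Matrix (Fin 2) (Fin 2) ℂ := !![0, 1; 1, 0]

variable {a b : Type} [Fintype a] [DecidableEq a] [Fintype b] [DecidableEq b]

/-- `A` viewed as an operator on `H_A ⊗ H_B`. -/
def extA (A : Matrix a a ℂ) : Matrix (a × b) (a × b) ℂ := A ⊗ₖ (1 : Matrix b b ℂ)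

/-- `B` viewed as an operator on `H_A ⊗ H_B`. -/
def extB (B : Matrix b b ℂ) : Matrix (a × b) (a × b) ℂ := (1 : Matrix a a ℂ) ⊗ₖ B

/-- The subdivision-gadget simulator Hamiltonian
`H = Δ|1⟩⟨1|⊗I + √(ΔJ/2) X⊗(-A+B) + (J/2) I⊗(A²+B²)` on `ℂ² ⊗ H_A ⊗ H_B`. -/
def gadgetH (A : Matrix a a ℂ) (B : Matrix b b ℂ) (J Δ : ℝ) :
    Matrix (Fin 2 × a × b) (Fin 2 × a × b) ℂ :=
  (Δ : ℂ) • (P1 ⊗ₖ (1 : Matrix (a × b) (a × b) ℂ)) +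
    ((Real.sqrt (Δ * J / 2) : ℝ) : ℂ) • (pX ⊗ₖ (-(extA A) + extB B)) +
    ((J / 2 : ℝ) : ℂ) • ((1 : Matrix (Fin 2) (Fin 2) ℂ) ⊗ₖ ((extA A) ^ 2 + (extB B) ^ 2))

/-- The smallest (real) point of the spectrum of a matrix; for a Hermitian matrix on a
nonempty finite-dimensional space this is the smallest eigenvalue. -/
def lamMin {m : Type*} [Fintype m] [DecidableEq m] (M : Matrix m m ℂ) : ℝ :=
  sInf {x : ℝ | (x : ℂ) ∈ spectrum ℂ M}

/-! ### Auxiliary lemmas -/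

section Aux

lemma spectrum_unitary_conj {n : Type*} [Fintype n] [DecidableEq n]
    (U M : Matrix n n ℂ) (h1 : U * Uᴴ = 1) :
    spectrum ℂ (U * M * Uᴴ) = spectrum ℂ M := by
  have hdet : U.det * Uᴴ.det = 1 := by rw [← det_mul, h1, det_one]
  ext x
  have key : (algebraMap ℂ (Matrix n n ℂ) x) - U * M * Uᴴ
      = U * ((algebraMap ℂ (Matrix n n ℂ) x) - M) * Uᴴ := by
    rw [Matrix.mul_sub, Matrix.sub_mul]
    congr 1
    rw [mul_assoc, Algebra.commutes x Uᴴ, ← mul_assoc, h1, one_mul]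
  simp only [spectrum.mem_iff, key, Matrix.isUnit_iff_isUnit_det, det_mul]
  rw [mul_comm, ← mul_assoc, mul_comm Uᴴ.det U.det, hdet, one_mul]

lemma spectrum_blockDiagonal {n o : Type*} [Fintype n] [DecidableEq n] [Fintype o]
    [DecidableEq o] (M : o → Matrix n n ℂ) :
    spectrum ℂ (blockDiagonal M) = ⋃ k, spectrum ℂ (M k) := by
  ext x
  have key : (algebraMap ℂ (Matrix (n × o) (n × o) ℂ) x) - blockDiagonal M
      = blockDiagonal (fun k => (algebraMap ℂ (Matrix n n ℂ) x) - M k) := by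
    have : (fun k => (algebraMap ℂ (Matrix n n ℂ) x) - M k)
        = (fun _ => algebraMap ℂ (Matrix n n ℂ) x) - M := rfl
    rw [this, blockDiagonal_sub]
    congr 1
    simp only [Algebra.algebraMap_eq_smul_one]
    rw [show (fun _ : o => x • (1 : Matrix n n ℂ)) = x • (fun _ : o => (1 : Matrix n n ℂ)) from
      rfl, blockDiagonal_smul]
    exact congrArg (x • ·) (blockDiagonal_one (m := n) (o := o) (α := ℂ)).symm
  simp only [Set.mem_iUnion, spectrum.mem_iff, key, Matrix.isUnit_iff_isUnit_det,
    det_blockDiagonal, isUnit_iff_ne_zero, not_not, Finset.prod_eq_zero_iff]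
  constructor
  · rintro ⟨k, _, hk⟩; exact ⟨k, hk⟩
  · rintro ⟨k, hk⟩; exact ⟨k, Finset.mem_univ k, hk⟩

/-- The elementary `2 × 2` block `c•1 + w•X + d•|1⟩⟨1|`. -/
def blk2 (c w d : ℝ) : Matrix (Fin 2) (Fin 2) ℂ := (c:ℂ) • 1 + (w:ℂ) • pX + (d:ℂ) • P1

lemma spectrum_blk2 (c w d x : ℝ) :
    ((x:ℂ) ∈ spectrum ℂ (blk2 c w d)) ↔
      (x = c + d/2 - Real.sqrt (d^2/4 + w^2) ∨ x = c + d/2 + Real.sqrt (d^2/4 + w^2)) := by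
  have hs : (Real.sqrt (d^2/4 + w^2) : ℝ)^2 = d^2/4 + w^2 := Real.sq_sqrt (by positivity)
  have hsC : ((Real.sqrt (d^2/4 + w^2) : ℝ) : ℂ)^2 = (d:ℂ)^2/4 + (w:ℂ)^2 := by
    exact_mod_cast congrArg Complex.ofReal hs
  set s : ℝ := Real.sqrt (d^2/4 + w^2) with hsdef
  rw [spectrum.mem_iff, Matrix.isUnit_iff_isUnit_det, isUnit_iff_ne_zero, not_not]
  have hdet : ((algebraMap ℂ (Matrix (Fin 2) (Fin 2) ℂ)) (x:ℂ) - blk2 c w d).det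
      = ((x:ℂ) - ((c:ℂ) + (d:ℂ)/2 - (s:ℂ))) * ((x:ℂ) - ((c:ℂ) + (d:ℂ)/2 + (s:ℂ))) := by
    rw [Matrix.det_fin_two]
    simp only [blk2, P1, pX, Algebra.algebraMap_eq_smul_one, Matrix.sub_apply, Matrix.add_apply,
      Matrix.smul_apply, Matrix.one_apply, Matrix.cons_val', Matrix.cons_val_zero,
      Matrix.cons_val_one, Matrix.head_cons, Matrix.empty_val',
      Matrix.cons_val_fin_one, smul_eq_mul, if_true, if_false,
      mul_one, mul_zero]
    norm_num
    linear_combination hsC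
  rw [hdet, mul_eq_zero, sub_eq_zero, sub_eq_zero]
  norm_cast

lemma kron_conjT {l m p q : Type*} [Fintype l] [Fintype m] [Fintype p] [Fintype q]
    (M : Matrix l m ℂ) (N : Matrix p q ℂ) : (M ⊗ₖ N)ᴴ = Mᴴ ⊗ₖ Nᴴ := by
  ext ⟨i, j⟩ ⟨k, l'⟩
  simp only [Matrix.conjTranspose_apply, Matrix.kroneckerMap_apply, star_mul']

lemma mat_conj_mul {n : Type*} [Fintype n] [DecidableEq n] (Q X Y : Matrix n n ℂ)
    (hQ' : Qᴴ * Q = 1) : Q * (X * Y) * Qᴴ = (Q * X * Qᴴ) * (Q * Y * Qᴴ) := by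
  have h : Qᴴ * (Q * (Y * Qᴴ)) = Y * Qᴴ := by rw [← Matrix.mul_assoc, hQ', one_mul]
  simp only [Matrix.mul_assoc, h]

lemma extA_conj (U : Matrix a a ℂ) (V : Matrix b b ℂ) (hV : V * Vᴴ = 1) (A : Matrix a a ℂ) :
    (U ⊗ₖ V) * (extA A : Matrix (a × b) (a × b) ℂ) * (U ⊗ₖ V)ᴴ = extA (U * A * Uᴴ) := by
  rw [kron_conjT, extA, extA, ← mul_kronecker_mul, ← mul_kronecker_mul, Matrix.mul_one, hV]

lemma extB_conj (U : Matrix a a ℂ) (V : Matrix b b ℂ) (hU : U * Uᴴ = 1) (B : Matrix b b ℂ) :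
    (U ⊗ₖ V) * (extB B : Matrix (a × b) (a × b) ℂ) * (U ⊗ₖ V)ᴴ = extB (V * B * Vᴴ) := by
  rw [kron_conjT, extB, extB, ← mul_kronecker_mul, ← mul_kronecker_mul, Matrix.mul_one, hU]

lemma conj_kron3 (U : Matrix a a ℂ) (V : Matrix b b ℂ)
    (M : Matrix (Fin 2) (Fin 2) ℂ) (N : Matrix (a × b) (a × b) ℂ) :
    ((1 : Matrix (Fin 2) (Fin 2) ℂ) ⊗ₖ (U ⊗ₖ V)) * (M ⊗ₖ N) *
      ((1 : Matrix (Fin 2) (Fin 2) ℂ) ⊗ₖ (U ⊗ₖ V))ᴴ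
      = M ⊗ₖ ((U ⊗ₖ V) * N * (U ⊗ₖ V)ᴴ) := by
  rw [kron_conjT, conjTranspose_one, ← mul_kronecker_mul, ← mul_kronecker_mul,
    Matrix.one_mul, Matrix.mul_one]

lemma gadget_conj (A : Matrix a a ℂ) (B : Matrix b b ℂ) (U : Matrix a a ℂ) (V : Matrix b b ℂ)
    (hU : U * Uᴴ = 1) (hU' : Uᴴ * U = 1) (hV : V * Vᴴ = 1) (hV' : Vᴴ * V = 1) (J Δ : ℝ) :
    gadgetH (U * A * Uᴴ) (V * B * Vᴴ) J Δ
      = ((1 : Matrix (Fin 2) (Fin 2) ℂ) ⊗ₖ (U ⊗ₖ V)) * gadgetH A B J Δ *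
        ((1 : Matrix (Fin 2) (Fin 2) ℂ) ⊗ₖ (U ⊗ₖ V))ᴴ := by
  have hQ : (U ⊗ₖ V) * (U ⊗ₖ V)ᴴ = 1 := by
    rw [kron_conjT, ← mul_kronecker_mul, hU, hV, one_kronecker_one]
  have hQ' : (U ⊗ₖ V)ᴴ * (U ⊗ₖ V) = 1 := by
    rw [kron_conjT, ← mul_kronecker_mul, hU', hV', one_kronecker_one]
  unfold gadgetH
  rw [Matrix.mul_add, Matrix.mul_add, Matrix.add_mul, Matrix.add_mul]
  rw [mul_smul_comm, mul_smul_comm, mul_smul_comm, smul_mul_assoc, smul_mul_assoc,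
    smul_mul_assoc]
  rw [conj_kron3, conj_kron3, conj_kron3]
  congr 2
  · rw [Matrix.mul_one, hQ]
  · rw [Matrix.mul_add, Matrix.add_mul, Matrix.mul_neg, Matrix.neg_mul,
      extA_conj U V hV, extB_conj U V hU]
  · simp only [sq]
    rw [Matrix.mul_add, Matrix.add_mul, mat_conj_mul _ _ _ hQ', mat_conj_mul _ _ _ hQ',
      extA_conj U V hV, extB_conj U V hU]

lemma kron_diag_blockDiagonal {o : Type*} [DecidableEq o]
    (M : Matrix (Fin 2) (Fin 2) ℂ) (dg : o → ℂ) :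
    M ⊗ₖ diagonal dg = blockDiagonal (fun p => dg p • M) := by
  ext ⟨i, p⟩ ⟨j, q⟩
  simp only [Matrix.kroneckerMap_apply, Matrix.blockDiagonal_apply, Matrix.diagonal_apply,
    Matrix.smul_apply, smul_eq_mul]
  by_cases h : p = q <;> simp [h, mul_comm]

lemma gadget_diag (f : a → ℝ) (g : b → ℝ) (J Δ : ℝ) :
    gadgetH (diagonal (fun i => (f i : ℂ))) (diagonal (fun j => (g j : ℂ))) J Δ =
      blockDiagonal (fun p : a × b =>
        blk2 (J/2*((f p.1)^2+(g p.2)^2)) (Real.sqrt (Δ*J/2)*(g p.2 - f p.1)) Δ) := by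
  have hA : (extA (diagonal (fun i => (f i:ℂ))) : Matrix (a × b) (a × b) ℂ)
      = diagonal (fun p : a × b => (f p.1 : ℂ)) := by
    rw [extA, show (1 : Matrix b b ℂ) = diagonal (fun _ => 1) from (diagonal_one).symm,
      diagonal_kronecker_diagonal]
    simp
  have hB : (extB (diagonal (fun j => (g j:ℂ))) : Matrix (a × b) (a × b) ℂ)
      = diagonal (fun p : a × b => (g p.2 : ℂ)) := by
    rw [extB, show (1 : Matrix a a ℂ) = diagonal (fun _ => 1) from (diagonal_one).symm,
      diagonal_kronecker_diagonal]
    simp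
  unfold gadgetH
  rw [hA, hB]
  rw [show -(diagonal (fun p : a × b => (f p.1 : ℂ))) + diagonal (fun p : a × b => (g p.2 : ℂ))
      = diagonal (fun p : a × b => ((g p.2 : ℂ) - f p.1)) by
    ext p q
    rcases eq_or_ne p q with h|h
    · subst h; simp; ring
    · simp [Matrix.diagonal_apply_ne _ h, h]]
  rw [show (diagonal (fun p : a × b => (f p.1 : ℂ)))^2 + (diagonal (fun p : a × b => (g p.2 : ℂ)))^2
      = diagonal (fun p : a × b => ((f p.1 : ℂ)^2 + (g p.2 : ℂ)^2)) by
    ext p q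
    rcases eq_or_ne p q with h|h
    · subst h; simp [pow_two, Matrix.mul_apply, Finset.sum_ite_eq, Matrix.add_apply,
        Matrix.diagonal_apply]
    · simp [Matrix.diagonal_apply, h, pow_two, Matrix.mul_apply, Finset.sum_ite_eq,
        Matrix.add_apply]]
  rw [show (1 : Matrix (a × b) (a × b) ℂ) = diagonal (fun _ => 1) from (diagonal_one).symm]
  rw [kron_diag_blockDiagonal, kron_diag_blockDiagonal, kron_diag_blockDiagonal]
  rw [← blockDiagonal_smul, ← blockDiagonal_smul, ← blockDiagonal_smul,
    ← blockDiagonal_add, ← blockDiagonal_add]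
  refine congrArg Matrix.blockDiagonal (funext fun p => ?_)
  unfold blk2
  simp only [Pi.add_apply, Pi.smul_apply, smul_smul, one_smul]
  push_cast
  module

set_option maxHeartbeats 1000000 in
lemma scalar_est (J ε α β : ℝ) (hJ : 0 < J) (hε : 0 < ε) (hε1 : ε ≤ 1)
    (hα : |α| ≤ 1) (hβ : |β| ≤ 1) :
    J*α*β ≤ J/2*(α^2+β^2) + (J*ε⁻¹^2)/2
        - Real.sqrt ((J*ε⁻¹^2)^2/4 + (Real.sqrt ((J*ε⁻¹^2)*J/2)*(β-α))^2) ∧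
    J/2*(α^2+β^2) + (J*ε⁻¹^2)/2
        - Real.sqrt ((J*ε⁻¹^2)^2/4 + (Real.sqrt ((J*ε⁻¹^2)*J/2)*(β-α))^2) ≤ J*α*β + 4*(ε*J) := by
  have hεinv : (1:ℝ) ≤ ε⁻¹ := (one_le_inv₀ hε).2 hε1
  have hεinv2 : (1:ℝ) ≤ ε⁻¹^2 := one_le_pow₀ hεinv
  obtain ⟨Δ, hΔdef⟩ : ∃ t, t = J*ε⁻¹^2 := ⟨_, rfl⟩
  rw [← hΔdef]
  have hΔpos : 0 < Δ := by rw [hΔdef]; positivity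
  have hJΔ : J ≤ Δ := by
    rw [hΔdef]; nlinarith [mul_le_mul_of_nonneg_left hεinv2 hJ.le]
  have hεΔ : J ≤ ε*Δ := by
    rw [hΔdef, show ε*(J*ε⁻¹^2) = J*ε⁻¹ by field_simp]
    nlinarith [mul_le_mul_of_nonneg_left hεinv hJ.le]
  have hw2 : Δ^2/4 + (Real.sqrt (Δ*J/2)*(β-α))^2 = Δ^2/4 + Δ*(J/2*(β-α)^2) := by
    rw [mul_pow, Real.sq_sqrt (by positivity)]; ring
  rw [hw2]
  obtain ⟨y, hydef⟩ : ∃ t, t = J/2*(β-α)^2 := ⟨_, rfl⟩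
  rw [← hydef]
  have hy0 : 0 ≤ y := by rw [hydef]; positivity
  have hab := abs_le.1 hα
  have hbb := abs_le.1 hβ
  have h4 : 0 ≤ 4 - (β-α)^2 := by
    nlinarith [mul_nonneg (by linarith : (0:ℝ) ≤ β - α + 2) (by linarith : (0:ℝ) ≤ 2 - (β - α))]
  have hy2 : y ≤ 2*J := by rw [hydef]; nlinarith [mul_nonneg h4 hJ.le]
  have hq0 : 0 ≤ y^2/Δ := by positivity
  have hqΔ : y^2/Δ * Δ = y^2 := div_mul_cancel₀ _ (ne_of_gt hΔpos)
  have hq2y : y^2/Δ ≤ 2*y := by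
    rw [div_le_iff₀ hΔpos]; nlinarith [mul_nonneg hy0 (by linarith : (0:ℝ) ≤ 2*Δ - y)]
  have hyΔ : y^2/Δ ≤ 4*(ε*J) := by
    rw [div_le_iff₀ hΔpos]
    nlinarith [mul_le_mul hy2 hy2 hy0 (by linarith : (0:ℝ) ≤ 2*J),
      mul_le_mul_of_nonneg_left hεΔ (by positivity : (0:ℝ) ≤ 4*J)]
  obtain ⟨s, hsdef⟩ : ∃ t, t = Real.sqrt (Δ^2/4 + Δ*y) := ⟨_, rfl⟩
  rw [← hsdef]
  have hs2 : s^2 = Δ^2/4 + Δ*y := by rw [hsdef]; exact Real.sq_sqrt (by positivity)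
  have hs_nonneg : 0 ≤ s := hsdef ▸ Real.sqrt_nonneg _
  have hs_le : s ≤ Δ/2 + y := by
    rw [hsdef, show Δ/2 + y = Real.sqrt ((Δ/2+y)^2) from (Real.sqrt_sq (by positivity)).symm]
    exact Real.sqrt_le_sqrt (by nlinarith [sq_nonneg y])
  have hs_ge : Δ/2 + y - y^2/Δ ≤ s := by
    have hsq : (Δ/2 + y - y^2/Δ)^2 ≤ Δ^2/4 + Δ*y := by
      nlinarith [mul_nonneg hq0 (by linarith : (0:ℝ) ≤ 2*y - y^2/Δ), hqΔ]
    calc Δ/2 + y - y^2/Δ ≤ |Δ/2 + y - y^2/Δ| := le_abs_self _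
      _ = Real.sqrt ((Δ/2 + y - y^2/Δ)^2) := (Real.sqrt_sq_eq_abs _).symm
      _ ≤ s := hsdef ▸ Real.sqrt_le_sqrt hsq
  have hc : J/2*(α^2+β^2) = J*α*β + y := by rw [hydef]; ring
  constructor
  · rw [hc]; linarith
  · rw [hc]; linarith

lemma lamMin_of_isEmpty {m : Type*} [Fintype m] [DecidableEq m] [IsEmpty m]
    (M : Matrix m m ℂ) : lamMin M = 0 := by
  haveI : Subsingleton (Matrix m m ℂ) :=
    ⟨fun M N => by ext i j; exact (IsEmpty.false i).elim⟩
  have h : {x : ℝ | (x:ℂ) ∈ spectrum ℂ M} = ∅ :=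
    Set.eq_empty_iff_forall_notMem.2 fun x hx =>
      (spectrum.mem_iff.mp hx) (isUnit_of_subsingleton _)
  unfold lamMin
  rw [h]
  exact Real.sInf_empty

end Aux

/-- **Ground-state energy of the subdivision gadget.** There is an absolute constant `C > 0`
such that, in the subdivision-gadget setting with `0 < J`, `0 < ε ≤ 1` and `Δ = J ε⁻²`,
the smallest eigenvalue of the simulator Hamiltonian `H` differs from the smallest eigenvalue
of the target `J·(A⊗B)` by at most `C·ε·J`. -/
theorem subdivision_gadget_ground_energy :
    ∃ C : ℝ, 0 < C ∧
      ∀ (a b : Type) (_ : Fintype a) (_ : DecidableEq a) (_ : Fintype b) (_ : DecidableEq b)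
        (A : Matrix a a ℂ) (B : Matrix b b ℂ),
        A.IsHermitian → B.IsHermitian → ‖A‖ ≤ 1 → ‖B‖ ≤ 1 →
        ∀ (J ε : ℝ), 0 < J → 0 < ε → ε ≤ 1 →
          |lamMin (gadgetH A B J (J * ε⁻¹ ^ 2)) - lamMin ((J : ℂ) • (A ⊗ₖ B))| ≤ C * ε * J := by
  refine ⟨4, by norm_num, ?_⟩
  intro a b _ _ _ _ A B hA hB hnA hnB J ε hJ hε hε1
  by_cases hne : Nonempty (a × b)
  case neg =>
    haveI : IsEmpty (a × b) := not_nonempty_iff.mp hne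
    rw [lamMin_of_isEmpty, lamMin_of_isEmpty]
    simp only [sub_zero, abs_zero]
    positivity
  case pos =>
  obtain ⟨⟨i0, j0⟩⟩ := hne
  haveI : Nonempty a := ⟨i0⟩
  haveI : Nonempty b := ⟨j0⟩
  set Δ : ℝ := J * ε⁻¹ ^ 2 with hΔdef
  set U : Matrix a a ℂ := (hA.eigenvectorUnitary : Matrix a a ℂ) with hUdef
  set V : Matrix b b ℂ := (hB.eigenvectorUnitary : Matrix b b ℂ) with hVdef
  set dA : a → ℝ := hA.eigenvalues with hdAdef
  set dB : b → ℝ := hB.eigenvalues with hdBdef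
  have hU : U * Uᴴ = 1 := by
    simpa [Matrix.star_eq_conjTranspose] using
      (Matrix.mem_unitaryGroup_iff).mp hA.eigenvectorUnitary.2
  have hU' : Uᴴ * U = 1 := by
    simpa [Matrix.star_eq_conjTranspose] using
      (Matrix.mem_unitaryGroup_iff').mp hA.eigenvectorUnitary.2
  have hV : V * Vᴴ = 1 := by
    simpa [Matrix.star_eq_conjTranspose] using
      (Matrix.mem_unitaryGroup_iff).mp hB.eigenvectorUnitary.2
  have hV' : Vᴴ * V = 1 := by
    simpa [Matrix.star_eq_conjTranspose] using
      (Matrix.mem_unitaryGroup_iff').mp hB.eigenvectorUnitary.2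
  have hAeq : A = U * diagonal (fun i => (dA i : ℂ)) * Uᴴ := by
    conv_lhs => rw [hA.spectral_theorem]
    rfl
  have hBeq : B = V * diagonal (fun j => (dB j : ℂ)) * Vᴴ := by
    conv_lhs => rw [hB.spectral_theorem]
    rfl
  have hdA : ∀ i, |dA i| ≤ 1 := by
    intro i
    have h1 : ((dA i : ℝ) : ℂ) ∈ spectrum ℂ A :=
      spectrum.algebraMap_mem ℂ (hA.eigenvalues_mem_spectrum_real i)
    have h2 := spectrum.norm_le_norm_of_mem h1
    rw [Complex.norm_real] at h2
    exact h2.trans hnA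
  have hdB : ∀ j, |dB j| ≤ 1 := by
    intro j
    have h1 : ((dB j : ℝ) : ℂ) ∈ spectrum ℂ B :=
      spectrum.algebraMap_mem ℂ (hB.eigenvalues_mem_spectrum_real j)
    have h2 := spectrum.norm_le_norm_of_mem h1
    rw [Complex.norm_real] at h2
    exact h2.trans hnB
  set lo : a × b → ℝ := fun p => J/2*((dA p.1)^2+(dB p.2)^2) + Δ/2
      - Real.sqrt (Δ^2/4 + (Real.sqrt (Δ*J/2)*(dB p.2 - dA p.1))^2) with hlo
  set hi : a × b → ℝ := fun p => J/2*((dA p.1)^2+(dB p.2)^2) + Δ/2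
      + Real.sqrt (Δ^2/4 + (Real.sqrt (Δ*J/2)*(dB p.2 - dA p.1))^2) with hhi
  set tg : a × b → ℝ := fun p => J * dA p.1 * dB p.2 with htg
  have hspecGad : {x : ℝ | (x : ℂ) ∈ spectrum ℂ (gadgetH A B J Δ)}
      = Set.range lo ∪ Set.range hi := by
    have e1 : gadgetH A B J Δ
        = ((1 : Matrix (Fin 2) (Fin 2) ℂ) ⊗ₖ (U ⊗ₖ V)) *
          gadgetH (diagonal fun i => (dA i:ℂ)) (diagonal fun j => (dB j:ℂ)) J Δ *
          ((1 : Matrix (Fin 2) (Fin 2) ℂ) ⊗ₖ (U ⊗ₖ V))ᴴ := by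
      conv_lhs => rw [hAeq, hBeq]
      exact gadget_conj _ _ U V hU hU' hV hV' J Δ
    have hW : ((1 : Matrix (Fin 2) (Fin 2) ℂ) ⊗ₖ (U ⊗ₖ V)) *
        ((1 : Matrix (Fin 2) (Fin 2) ℂ) ⊗ₖ (U ⊗ₖ V))ᴴ = 1 := by
      rw [kron_conjT, kron_conjT, conjTranspose_one, ← mul_kronecker_mul,
        ← mul_kronecker_mul, hU, hV, Matrix.mul_one, one_kronecker_one, one_kronecker_one]
    ext x
    rw [Set.mem_setOf_eq, e1, spectrum_unitary_conj _ _ hW, gadget_diag,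
      spectrum_blockDiagonal]
    simp only [Set.mem_iUnion, Set.mem_union, Set.mem_range]
    constructor
    · rintro ⟨p, hp⟩
      rcases (spectrum_blk2 _ _ _ x).mp hp with h | h
      · exact Or.inl ⟨p, h.symm⟩
      · exact Or.inr ⟨p, h.symm⟩
    · rintro (⟨p, hp⟩ | ⟨p, hp⟩)
      · exact ⟨p, (spectrum_blk2 _ _ _ x).mpr (Or.inl hp.symm)⟩
      · exact ⟨p, (spectrum_blk2 _ _ _ x).mpr (Or.inr hp.symm)⟩
  have hspecT : {x : ℝ | (x : ℂ) ∈ spectrum ℂ ((J:ℂ) • (A ⊗ₖ B))} = Set.range tg := by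
    have hQ : (U ⊗ₖ V) * (U ⊗ₖ V)ᴴ = 1 := by
      rw [kron_conjT, ← mul_kronecker_mul, hU, hV, one_kronecker_one]
    have e2 : (J:ℂ) • (A ⊗ₖ B)
        = (U ⊗ₖ V) * ((J:ℂ) • (diagonal (fun i => (dA i:ℂ)) ⊗ₖ
            diagonal (fun j => (dB j:ℂ)))) * (U ⊗ₖ V)ᴴ := by
      conv_lhs => rw [hAeq, hBeq]
      rw [mul_smul_comm, smul_mul_assoc]
      congr 1
      rw [kron_conjT, ← mul_kronecker_mul, ← mul_kronecker_mul]
    have e3 : (J:ℂ) • (diagonal (fun i => (dA i:ℂ)) ⊗ₖ diagonal (fun j => (dB j:ℂ)))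
        = diagonal (fun p : a × b => ((J * dA p.1 * dB p.2 : ℝ) : ℂ)) := by
      rw [diagonal_kronecker_diagonal]
      ext p q
      rcases eq_or_ne p q with h|h
      · subst h; simp [Matrix.diagonal_apply_eq]; push_cast; ring
      · simp [Matrix.diagonal_apply_ne _ h, h]
    ext x
    rw [Set.mem_setOf_eq, e2, spectrum_unitary_conj _ _ hQ, e3, spectrum_diagonal]
    simp only [Set.mem_range]
    constructor
    · rintro ⟨p, hp⟩
      exact ⟨p, by exact_mod_cast hp⟩
    · rintro ⟨p, hp⟩
      exact ⟨p, by exact_mod_cast congrArg Complex.ofReal hp⟩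
  have hle : ∀ p : a × b, tg p ≤ lo p ∧ lo p ≤ tg p + 4*(ε*J) := by
    intro p
    have h := scalar_est J ε (dA p.1) (dB p.2) hJ hε hε1 (hdA p.1) (hdB p.2)
    constructor
    · simpa only [hlo, htg, hΔdef] using h.1
    · simpa only [hlo, htg, hΔdef] using h.2
  have hlohi : ∀ p, lo p ≤ hi p := by
    intro p
    simp only [hlo, hhi]
    have := Real.sqrt_nonneg (Δ^2/4 + (Real.sqrt (Δ*J/2)*(dB p.2 - dA p.1))^2)
    linarith
  have hfin1 : (Set.range lo ∪ Set.range hi).Finite :=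
    (Set.finite_range lo).union (Set.finite_range hi)
  have hne1 : (Set.range lo ∪ Set.range hi).Nonempty :=
    ⟨lo (i0, j0), Or.inl ⟨(i0, j0), rfl⟩⟩
  have hfin2 : (Set.range tg).Finite := Set.finite_range tg
  have hne2 : (Set.range tg).Nonempty := ⟨tg (i0, j0), ⟨(i0, j0), rfl⟩⟩
  unfold lamMin
  rw [hspecGad, hspecT]
  have hm1mem := hne1.csInf_mem hfin1
  have hm2mem := hne2.csInf_mem hfin2
  set m1 := sInf (Set.range lo ∪ Set.range hi) with hm1
  set m2 := sInf (Set.range tg) with hm2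
  have h21 : m2 ≤ m1 := by
    rcases hm1mem with ⟨p, hp⟩ | ⟨p, hp⟩
    · calc m2 ≤ tg p := csInf_le hfin2.bddBelow ⟨p, rfl⟩
        _ ≤ lo p := (hle p).1
        _ = m1 := hp
    · calc m2 ≤ tg p := csInf_le hfin2.bddBelow ⟨p, rfl⟩
        _ ≤ lo p := (hle p).1
        _ ≤ hi p := hlohi p
        _ = m1 := hp
  have h12 : m1 ≤ m2 + 4*(ε*J) := by
    rcases hm2mem with ⟨p, hp⟩
    calc m1 ≤ lo p := csInf_le hfin1.bddBelow (Or.inl ⟨p, rfl⟩)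
      _ ≤ tg p + 4*(ε*J) := (hle p).2
      _ = m2 + 4*(ε*J) := by rw [hp]
  have h40 : (0:ℝ) ≤ 4*(ε*J) := by positivity
  rw [show (4:ℝ) * ε * J = 4*(ε*J) by ring]
  exact abs_le.mpr ⟨by linarith, by linarith⟩

end
end

section
/- Lower bound transfer through an approximate unitary: let H be Hermitian, S anti-Hermitian, and T Hermitian on a finite-dimensional Hilbert space, and suppose e^S H e^{-S} ≥ T - ε₁ I and ‖[S, T]‖ ≤ ε₂. Then H ≥ T - (ε₁ + ε₂) I. -/
open scoped Matrix.Norms.L2Operator ComplexOrder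
open Matrix NormedSpace

namespace LBTAux

variable {n : ℕ}

lemma exp_mem_unitary (S : Matrix (Fin n) (Fin n) ℂ) (hS : Sᴴ = -S) :
    exp S ∈ unitary (Matrix (Fin n) (Fin n) ℂ) :=
  by
  have h : S ∈ skewAdjoint (Matrix (Fin n) (Fin n) ℂ) := by
    simpa [skewAdjoint.mem_iff, Matrix.star_eq_conjTranspose] using hS
  rw [Unitary.mem_iff, star_exp, skewAdjoint.mem_iff.mp h, ←
    Matrix.exp_add_of_commute _ _ (Commute.refl S).neg_left,
    ← Matrix.exp_add_of_commute _ _ (Commute.refl S).neg_right,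
    neg_add_cancel, add_neg_cancel, exp_zero, and_self_iff]

lemma conj_comm_bound (S T : Matrix (Fin n) (Fin n) ℂ) (hS : Sᴴ = -S) :
    ‖exp (-S) * T * exp S - T‖ ≤ ‖S * T - T * S‖ := by
  have hexp : (exp : Matrix (Fin n) (Fin n) ℂ → _) = exp := rfl
  set f : ℝ → Matrix (Fin n) (Fin n) ℂ :=
    fun t => exp (t • (-S)) * T * exp (t • S) with hf_def
  set f' : ℝ → Matrix (Fin n) (Fin n) ℂ :=
    fun t => exp (t • (-S)) * (T * S - S * T) * exp (t • S) with hf'_def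
  have hderiv : ∀ t : ℝ, HasDerivAt f (f' t) t := by
    intro t
    have h1 : HasDerivAt (fun u : ℝ => exp (u • (-S))) (exp (t • (-S)) * (-S)) t :=
      hasDerivAt_exp_smul_const _ t
    have h2 : HasDerivAt (fun u : ℝ => exp (u • S)) (exp (t • S) * S) t :=
      hasDerivAt_exp_smul_const _ t
    have h3 := (h1.mul_const T).mul h2
    convert h3 using 1
    · rfl
    · rfl
    · rfl
    · rfl
    have hc : exp (t • S) * S = S * exp (t • S) :=
      (((Commute.refl S).smul_left t).exp_left).eq
    rw [hf'_def]
    simp only [mul_sub, sub_mul, mul_assoc]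
    rw [hc]
    noncomm_ring
  have hmemS : ∀ t : ℝ, exp (t • S) ∈ unitary (Matrix (Fin n) (Fin n) ℂ) := by
    intro t
    rw [hexp]
    refine exp_mem_unitary (t • S) ?_
    rw [conjTranspose_smul]
    simp [hS]
  have hns : ‖T * S - S * T‖ = ‖S * T - T * S‖ := by
    rw [← norm_neg (T * S - S * T)]; congr 1; abel
  have hbound : ∀ t : ℝ, ‖f' t‖ ≤ ‖S * T - T * S‖ := by
    intro t
    have h4 : exp (t • (-S)) ∈ unitary (Matrix (Fin n) (Fin n) ℂ) := by
      have := hmemS (-t)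
      rwa [neg_smul, ← smul_neg] at this
    have : ‖f' t‖ = ‖T * S - S * T‖ := by
      show ‖exp (t • (-S)) * (T * S - S * T) * exp (t • S)‖ = _
      rw [mul_assoc]
      rw [CStarRing.norm_coe_unitary_mul (⟨_, h4⟩ : unitary (Matrix (Fin n) (Fin n) ℂ))]
      exact CStarRing.norm_mul_coe_unitary _ (⟨_, hmemS t⟩ : unitary (Matrix (Fin n) (Fin n) ℂ))
    rw [this, hns]
  have key := Convex.norm_image_sub_le_of_norm_hasDerivWithin_le
    (f := f) (f' := f') (s := (Set.univ : Set ℝ))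
    (fun x _ => (hderiv x).hasDerivWithinAt) (fun x _ => hbound x)
    convex_univ (Set.mem_univ 0) (Set.mem_univ 1)
  have hf1 : f 1 = exp (-S) * T * exp S := by
    rw [hf_def]; simp [hexp]
  have hf0 : f 0 = T := by
    rw [hf_def]; simp [exp_zero]
  rw [hf1, hf0] at key
  simpa using key

lemma smul_one_add_posSemidef (A : Matrix (Fin n) (Fin n) ℂ) (hA : A.IsHermitian)
    {c : ℝ} (h : ‖A‖ ≤ c) : ((c : ℂ) • 1 + A).PosSemidef := by
  rw [posSemidef_iff_dotProduct_mulVec]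
  constructor
  · refine IsHermitian.add ?_ hA
    unfold Matrix.IsHermitian
    rw [conjTranspose_smul, conjTranspose_one]
    simp [Complex.star_def, Complex.conj_ofReal]
  · intro x
    set y : EuclideanSpace ℂ (Fin n) := (WithLp.equiv 2 _).symm x with hy
    set z : EuclideanSpace ℂ (Fin n) := (WithLp.equiv 2 _).symm (A *ᵥ x) with hz
    have hinner : dotProduct (star x) (A *ᵥ x) = inner ℂ y z :=
      by rw [EuclideanSpace.inner_eq_star_dotProduct, dotProduct_comm]; rfl
    have hxx : dotProduct (star x) x = inner ℂ y y :=
      by rw [EuclideanSpace.inner_eq_star_dotProduct, dotProduct_comm]; rfl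
    have hyy : (inner ℂ y y : ℂ) = ((‖y‖ ^ 2 : ℝ) : ℂ) := by
      rw [inner_self_eq_norm_sq_to_K]; norm_cast
    have hself : star (dotProduct (star x) (A *ᵥ x)) =
        dotProduct (star x) (A *ᵥ x) := by
      rw [← star_dotProduct, star_mulVec, hA.eq, ← dotProduct_mulVec]
    have hre : dotProduct (star x) (A *ᵥ x)
        = (((dotProduct (star x) (A *ᵥ x)).re : ℝ) : ℂ) := by
      rw [Complex.star_def, Complex.conj_eq_iff_re] at hself
      exact hself.symm
    have hnorm : ‖dotProduct (star x) (A *ᵥ x)‖ ≤ c * ‖y‖ ^ 2 := by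
      rw [hinner]
      calc ‖(inner ℂ y z : ℂ)‖ ≤ ‖y‖ * ‖z‖ := norm_inner_le_norm y z
        _ ≤ ‖y‖ * (‖A‖ * ‖y‖) := by
            refine mul_le_mul_of_nonneg_left ?_ (norm_nonneg _)
            exact A.l2_opNorm_mulVec y
        _ ≤ ‖y‖ * (c * ‖y‖) := by
            refine mul_le_mul_of_nonneg_left ?_ (norm_nonneg _)
            exact mul_le_mul_of_nonneg_right h (norm_nonneg _)
        _ = c * ‖y‖ ^ 2 := by ring
    set r : ℝ := (dotProduct (star x) (A *ᵥ x)).re with hr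
    have hrabs : |r| ≤ c * ‖y‖ ^ 2 := by
      refine le_trans ?_ hnorm
      exact Complex.abs_re_le_norm _
    have hfin : (0 : ℝ) ≤ c * ‖y‖ ^ 2 + r := by
      have := (abs_le.mp hrabs).1
      linarith
    rw [add_mulVec, dotProduct_add, smul_mulVec, one_mulVec, dotProduct_smul,
      smul_eq_mul, hxx, hyy, hre]
    rw [show (c : ℂ) * ((‖y‖ ^ 2 : ℝ) : ℂ) + ((r : ℝ) : ℂ)
        = ((c * ‖y‖ ^ 2 + r : ℝ) : ℂ) by push_cast; ring]
    exact_mod_cast hfin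

end LBTAux

/-- **Lower bound transfer through an approximate unitary.** Let `H`, `T` be Hermitian and
`S` anti-Hermitian, and suppose `e^S H e^{-S} ≥ T - ε₁ I` (positive semidefiniteness of the
difference) and `‖[S,T]‖ ≤ ε₂`. Then `H ≥ T - (ε₁ + ε₂) I`. -/
theorem lower_bound_transfer {n : ℕ} (S H T : Matrix (Fin n) (Fin n) ℂ)
    (hH : H.IsHermitian) (hS : Sᴴ = -S) (hT : T.IsHermitian)
    (ε₁ ε₂ : ℝ)
    (hge : (NormedSpace.exp S * H * NormedSpace.exp (-S) -
        (T - (ε₁ : ℂ) • (1 : Matrix (Fin n) (Fin n) ℂ))).PosSemidef)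
    (hcomm : ‖⁅S, T⁆‖ ≤ ε₂) :
    (H - (T - ((ε₁ + ε₂ : ℝ) : ℂ) • (1 : Matrix (Fin n) (Fin n) ℂ))).PosSemidef := by
  set e : Matrix (Fin n) (Fin n) ℂ := exp S with he
  set e' : Matrix (Fin n) (Fin n) ℂ := exp (-S) with he'
  have h1 : e' * e = 1 := by
    rw [he, he', ← Matrix.exp_add_of_commute _ _ (Commute.neg_left (Commute.refl S)),
      neg_add_cancel, exp_zero]
  have h2 : e * e' = 1 := by
    rw [he, he', ← Matrix.exp_add_of_commute _ _ (Commute.neg_right (Commute.refl S)),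
      add_neg_cancel, exp_zero]
  have hconj := hge.conjTranspose_mul_mul_same e
  have heH : eᴴ = e' := by rw [he, he', ← Matrix.exp_conjTranspose, hS]
  rw [heH] at hconj
  have hA : e' * (e * H * e') * e = H := by
    rw [← mul_assoc, ← mul_assoc, h1, one_mul, mul_assoc, h1, mul_one]
  have h3 : e' * ((ε₁ : ℂ) • 1) * e = (ε₁ : ℂ) • 1 := by
    rw [mul_smul_comm, mul_one, smul_mul_assoc, h1]
  have hsimp : e' * (e * H * e' - (T - (ε₁ : ℂ) • 1)) * e
      = H - (e' * T * e - (ε₁ : ℂ) • 1) := by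
    rw [mul_sub, sub_mul, mul_sub, sub_mul, hA, h3]
  rw [hsimp] at hconj
  have hHerm : (e' * T * e).IsHermitian := by
    unfold Matrix.IsHermitian
    have he'd : e'ᴴ = e := by
      rw [he, he', ← Matrix.exp_conjTranspose, conjTranspose_neg, hS, neg_neg]
    rw [conjTranspose_mul, conjTranspose_mul, heH, hT.eq, he'd, mul_assoc]
  have hbound : ‖e' * T * e - T‖ ≤ ε₂ := by
    refine le_trans (LBTAux.conj_comm_bound S T hS) ?_
    rwa [Ring.lie_def] at hcomm
  have hpsd2 : ((ε₂ : ℂ) • 1 + (e' * T * e - T)).PosSemidef :=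
    LBTAux.smul_one_add_posSemidef _ (hHerm.sub hT) hbound
  have hfinal : H - (T - ((ε₁ + ε₂ : ℝ) : ℂ) • 1)
      = (H - (e' * T * e - (ε₁ : ℂ) • 1)) + ((ε₂ : ℂ) • 1 + (e' * T * e - T)) := by
    push_cast
    rw [add_smul]
    abel
  rw [hfinal]
  exact hconj.add hpsd2
end
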